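/- Let T₁, T₂, T₃ ∈ B(H) satisfy 0 ≤ T₁T₁* + T₂T₂* − T₃T₃* ≤ I and let T be the positive square root of T₁T₁* + T₂T₂* − T₃T₃*. For ε > 0 let E_ε^⊥ = E((ε,∞)) be the spectral projection of T for the interval (ε,∞). Then there exists δ > 0 such that for all x ∈ E_ε^⊥ H: ‖T₁*x‖² + ‖T₂*x‖² − ‖T₃*x‖² ≥ δ(‖T₁*x‖² + ‖T₂*x‖² + ‖T₃*x‖²). -/

import Mathlib

set_option synthInstance.maxHeartbeats 800000
set_option maxHeartbeats 1000000

open ContinuousLinearMap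

/-- For a positive operator `T`, the spectral subspace of `[0, ε]` is
`{x | ‖Tⁿx‖ ≤ εⁿ‖x‖ for all n}`. -/
def spectralLE {H : Type*} [NormedAddCommGroup H] [InnerProductSpace ℂ H]
    (T : H →L[ℂ] H) (ε : ℝ) : Set H :=
  {x | ∀ n : ℕ, ‖(T ^ n) x‖ ≤ ε ^ n * ‖x‖}

/-- For a positive operator `T`, the range `E((ε,∞))H` of the spectral projection of `T`
for the interval `(ε,∞)` is the orthogonal complement of the spectral subspace of `[0, ε]`. -/
def spectralGT {H : Type*} [NormedAddCommGroup H] [InnerProductSpace ℂ H]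
    (T : H →L[ℂ] H) (ε : ℝ) : Set H :=
  {x | ∀ y ∈ spectralLE T ε, (inner ℂ y x : ℂ) = 0}

section Aux

variable {H : Type*} [NormedAddCommGroup H] [InnerProductSpace ℂ H] [CompleteSpace H]

local notation "⟪" x ", " y "⟫" => @inner ℂ _ _ x y

open RCLike in
lemma aux_inner_cfc_nonneg (T : H →L[ℂ] H) (f : ℝ → ℝ)
    (h : ∀ t ∈ spectrum ℝ T, 0 ≤ f t) (x : H) :
    0 ≤ re ⟪(cfc f T) x, x⟫ :=
  ((ContinuousLinearMap.nonneg_iff_isPositive _).mp (cfc_nonneg h)).re_inner_nonneg_left x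

open RCLike in
lemma aux_norm_sq_selfadj {B : H →L[ℂ] H} (hB : IsSelfAdjoint B) (x : H) :
    re ⟪B (B x), x⟫ = ‖B x‖ ^ 2 := by
  have h1 : ⟪B (B x), x⟫ = ⟪B x, B x⟫ := by
    rw [← ContinuousLinearMap.adjoint_inner_right B (B x) x, hB.adjoint_eq]
  rw [h1, inner_self_eq_norm_sq]

open RCLike in
lemma aux_re_inner_smul (r : ℝ) (v x : H) :
    re (inner ℂ (r • v) x : ℂ) = r * re (inner ℂ v x : ℂ) := by
  rw [RCLike.real_smul_eq_coe_smul (K := ℂ), inner_smul_real_left, RCLike.smul_re]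

open RCLike in
lemma aux_norm_cfc_sq {T : H →L[ℂ] H} (hT : IsSelfAdjoint T) (f : ℝ → ℝ) (hf : Continuous f)
    (x : H) :
    ‖(cfc f T) x‖ ^ 2 = re ⟪(cfc (fun t => f t * f t) T) x, x⟫ := by
  rw [cfc_mul f f T hf.continuousOn hf.continuousOn]
  have h1 : (cfc f T * cfc f T) x = cfc f T (cfc f T x) := rfl
  rw [h1, aux_norm_sq_selfadj (cfc_predicate f T) x]

end Aux

open RCLike in
/-- The subspace `{(T₁*x, T₂*x, T₃*x) : x ∈ E((ε,∞))H}` is uniformly positive: there is `δ > 0`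
with `‖T₁*x‖² + ‖T₂*x‖² − ‖T₃*x‖² ≥ δ(‖T₁*x‖² + ‖T₂*x‖² + ‖T₃*x‖²)` on `E((ε,∞))H`. -/
theorem uniformly_positive_subspace {H : Type*} [NormedAddCommGroup H] [InnerProductSpace ℂ H]
    [CompleteSpace H] (T₁ T₂ T₃ : H →L[ℂ] H)
    (hpos : (T₁ ∘L adjoint T₁ + T₂ ∘L adjoint T₂ - T₃ ∘L adjoint T₃).IsPositive)
    (hcontr : (1 - (T₁ ∘L adjoint T₁ + T₂ ∘L adjoint T₂ - T₃ ∘L adjoint T₃)).IsPositive)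
    (T : H →L[ℂ] H)
    (hT : T = CFC.sqrt (T₁ ∘L adjoint T₁ + T₂ ∘L adjoint T₂ - T₃ ∘L adjoint T₃))
    (ε : ℝ) (hε : 0 < ε) :
    ∃ δ : ℝ, 0 < δ ∧ ∀ x ∈ spectralGT T ε,
      δ * (‖adjoint T₁ x‖ ^ 2 + ‖adjoint T₂ x‖ ^ 2 + ‖adjoint T₃ x‖ ^ 2)
        ≤ ‖adjoint T₁ x‖ ^ 2 + ‖adjoint T₂ x‖ ^ 2 - ‖adjoint T₃ x‖ ^ 2 := by
  set A : H →L[ℂ] H := T₁ ∘L adjoint T₁ + T₂ ∘L adjoint T₂ - T₃ ∘L adjoint T₃ with hAdef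
  clear_value A
  have hAnn : (0 : H →L[ℂ] H) ≤ A := (nonneg_iff_isPositive A).mpr hpos
  have hTnn : (0 : H →L[ℂ] H) ≤ T := hT ▸ CFC.sqrt_nonneg A
  have hTsa : IsSelfAdjoint T := IsSelfAdjoint.of_nonneg hTnn
  have hT2 : T * T = A := by rw [hT]; exact CFC.sqrt_mul_sqrt_self A hAnn
  have hspec : ∀ t ∈ spectrum ℝ T, 0 ≤ t := fun t ht => spectrum_nonneg_of_nonneg hTnn ht
  -- the cutoff function
  set g : ℝ → ℝ := fun t => min 1 (max 0 (2 - 2 * t / ε)) with hgdef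
  have hgc : Continuous g := by fun_prop
  have hg0 : ∀ t, 0 ≤ g t := fun t => le_min one_pos.le (le_max_left 0 _)
  have hg1 : ∀ t, g t ≤ 1 := fun t => min_le_left _ _
  have hgone : ∀ t ≤ ε / 2, g t = 1 := by
    intro t ht
    have h2 : (1 : ℝ) ≤ 2 - 2 * t / ε := by
      have h3 : 2 * t / ε ≤ 1 := by rw [div_le_one hε]; linarith
      linarith
    simp only [hgdef]
    rw [min_eq_left (le_max_of_le_right h2)]
  have hgsupp : ∀ t, g t ≠ 0 → t < ε := by
    intro t hgt
    by_contra hle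
    push_neg at hle
    have h2 : 2 - 2 * t / ε ≤ 0 := by
      rw [sub_nonpos, le_div_iff₀ hε]; linarith
    apply hgt
    simp only [hgdef]
    rw [max_eq_left h2, min_eq_right zero_le_one]
  -- real-part inner product with A
  have hinnerA : ∀ x : H, re (inner ℂ (A x) x : ℂ)
      = ‖adjoint T₁ x‖ ^ 2 + ‖adjoint T₂ x‖ ^ 2 - ‖adjoint T₃ x‖ ^ 2 := by
    intro x
    have key : ∀ S : H →L[ℂ] H, re (inner ℂ ((S ∘L adjoint S) x) x : ℂ) = ‖adjoint S x‖ ^ 2 := by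
      intro S
      have h1 : (inner ℂ ((S ∘L adjoint S) x) x : ℂ) = inner ℂ (adjoint S x) (adjoint S x) := by
        rw [comp_apply, ← ContinuousLinearMap.adjoint_inner_right S (adjoint S x) x]
      rw [h1, inner_self_eq_norm_sq]
    simp only [hAdef, sub_apply, add_apply, inner_sub_left, inner_add_left, map_sub, map_add,
      key T₁, key T₂, key T₃]
  -- membership of cfc g T x in spectralLE
  have hmem : ∀ x : H, cfc g T x ∈ spectralLE T ε := by
    intro x n
    set F : ℝ → ℝ := fun t => t ^ n * g t with hFdef
    have hFc : Continuous F := by fun_prop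
    have hTn : (T ^ n) (cfc g T x) = cfc F T x := by
      rw [hFdef]
      rw [cfc_mul _ g T (by fun_prop) hgc.continuousOn, cfc_pow_id T n hTsa]
      rfl
    rw [hTn]
    have hsq : ‖cfc F T x‖ ^ 2 ≤ (ε ^ n * ‖cfc g T x‖) ^ 2 := by
      have hL := aux_norm_cfc_sq hTsa F hFc x
      have hR := aux_norm_cfc_sq hTsa g hgc x
      have hdiff : 0 ≤ re (inner ℂ
          ((cfc (fun t => (ε ^ n) ^ 2 * (g t * g t) - F t * F t) T) x) x : ℂ) := by
        apply aux_inner_cfc_nonneg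
        intro t ht
        have ht0 : 0 ≤ t := hspec t ht
        rcases eq_or_ne (g t) 0 with hgt | hgt
        · simp [hFdef, hgt]
        · have htε : t ≤ ε := (hgsupp t hgt).le
          have hpow : t ^ n ≤ ε ^ n := pow_le_pow_left₀ ht0 htε n
          have hpn : 0 ≤ t ^ n := pow_nonneg ht0 n
          have hgn := hg0 t
          simp only [hFdef]
          nlinarith [mul_le_mul_of_nonneg_right
            (mul_le_mul hpow hpow hpn (hpn.trans hpow)) (mul_nonneg hgn hgn)]
      rw [cfc_sub (fun t => (ε ^ n) ^ 2 * (g t * g t)) (fun t => F t * F t) T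
        (by fun_prop) (by fun_prop)] at hdiff
      rw [cfc_const_mul ((ε ^ n) ^ 2) (fun t => g t * g t) T (by fun_prop)] at hdiff
      rw [ContinuousLinearMap.sub_apply, inner_sub_left, map_sub,
        ContinuousLinearMap.smul_apply, aux_re_inner_smul] at hdiff
      rw [← hL, ← hR] at hdiff
      rw [mul_pow]
      linarith
    calc ‖cfc F T x‖ = √(‖cfc F T x‖ ^ 2) := by rw [Real.sqrt_sq (norm_nonneg _)]
      _ ≤ √((ε ^ n * ‖cfc g T x‖) ^ 2) := Real.sqrt_le_sqrt hsq
      _ = ε ^ n * ‖cfc g T x‖ := Real.sqrt_sq (by positivity)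
  -- the key lower bound on E((ε,∞))H
  have hlow : ∀ x ∈ spectralGT T ε, (ε / 2) ^ 2 * ‖x‖ ^ 2 ≤ re (inner ℂ (A x) x : ℂ) := by
    intro x hx
    have horth : (inner ℂ (cfc g T x) x : ℂ) = 0 := hx _ (hmem x)
    have hnn : 0 ≤ re (inner ℂ
        ((cfc (fun t => t * t - (ε / 2) ^ 2 * (1 - g t)) T) x) x : ℂ) := by
      apply aux_inner_cfc_nonneg
      intro t ht
      have ht0 : 0 ≤ t := hspec t ht
      rcases le_or_gt t (ε / 2) with hle | hlt
      · rw [hgone t hle]; nlinarith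
      · have := hg0 t; have := hg1 t; nlinarith
    rw [cfc_sub (fun t => t * t) (fun t => (ε / 2) ^ 2 * (1 - g t)) T
      (by fun_prop) (by fun_prop)] at hnn
    rw [cfc_mul (fun t : ℝ => t) (fun t : ℝ => t) T (by fun_prop) (by fun_prop),
      cfc_id' ℝ T hTsa] at hnn
    rw [cfc_const_mul ((ε / 2) ^ 2) (fun t => 1 - g t) T (by fun_prop)] at hnn
    rw [cfc_sub (fun _ : ℝ => (1 : ℝ)) g T (by fun_prop) hgc.continuousOn,
      cfc_const_one ℝ T] at hnn
    rw [hT2] at hnn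
    rw [ContinuousLinearMap.sub_apply, inner_sub_left, map_sub,
      ContinuousLinearMap.smul_apply, aux_re_inner_smul] at hnn
    have h1 : ((1 : H →L[ℂ] H) - cfc g T) x = x - cfc g T x := by
      rw [ContinuousLinearMap.sub_apply, ContinuousLinearMap.one_apply]
    rw [h1, inner_sub_left, map_sub, horth, map_zero, inner_self_eq_norm_sq] at hnn
    linarith
  -- choose δ
  refine ⟨ε ^ 2 / 4 / (2 * (‖adjoint T₁‖ ^ 2 + ‖adjoint T₂‖ ^ 2) + 1), by positivity, ?_⟩
  intro x hx
  set n1 : ℝ := ‖adjoint T₁‖ ^ 2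
  set n2 : ℝ := ‖adjoint T₂‖ ^ 2
  have hδ : ε ^ 2 / 4 / (2 * (n1 + n2) + 1) * (2 * (n1 + n2) + 1) = ε ^ 2 / 4 := by
    exact div_mul_cancel₀ _ (by rw [show n1 = ‖adjoint T₁‖ ^ 2 from rfl, show n2 = ‖adjoint T₂‖ ^ 2 from rfl]; positivity)
  have ha1 : ‖adjoint T₁ x‖ ^ 2 ≤ n1 * ‖x‖ ^ 2 := by
    have h := pow_le_pow_left₀ (norm_nonneg _) ((adjoint T₁).le_opNorm x) 2
    rw [mul_pow] at h; exact h
  have ha2 : ‖adjoint T₂ x‖ ^ 2 ≤ n2 * ‖x‖ ^ 2 := by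
    have h := pow_le_pow_left₀ (norm_nonneg _) ((adjoint T₂).le_opNorm x) 2
    rw [mul_pow] at h; exact h
  have hc : ‖adjoint T₃ x‖ ^ 2 ≤ ‖adjoint T₁ x‖ ^ 2 + ‖adjoint T₂ x‖ ^ 2 := by
    have := hpos.re_inner_nonneg_left x
    rw [hinnerA x] at this
    linarith
  have hmain : (ε / 2) ^ 2 * ‖x‖ ^ 2
      ≤ ‖adjoint T₁ x‖ ^ 2 + ‖adjoint T₂ x‖ ^ 2 - ‖adjoint T₃ x‖ ^ 2 := by
    rw [← hinnerA x]; exact hlow x hx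
  have hδpos : 0 < ε ^ 2 / 4 / (2 * (n1 + n2) + 1) := by positivity
  have hn1 : 0 ≤ n1 := by positivity
  have hn2 : 0 ≤ n2 := by positivity
  have hs : 0 ≤ ‖x‖ ^ 2 := by positivity
  have hc3 : 0 ≤ ‖adjoint T₃ x‖ ^ 2 := by positivity
  nlinarith [hδ, mul_nonneg hδpos.le hs, mul_le_mul_of_nonneg_left ha1 hδpos.le,
    mul_le_mul_of_nonneg_left ha2 hδpos.le, mul_le_mul_of_nonneg_left hc hδpos.le]
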